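/- Let G be a connected graph, (T, χ) a deciduous tree decomposition with bipartition (X, Y), leaves in Y, and let x ∈ X with S_x = (A_1, ..., A_k, C). Suppose C = χ(x) is a minimal cutset of G and A_1, ..., A_k are exactly the connected components of G \ C. Then for each neighbor y_i of x, χ(x) ⊆ χ(y_i); consequently the separation corresponding to edge xy_i is (A_i, ∪_{j≠i} A_j, C), i.e., it has middle set exactly C. -/

import Mathlib

open Set

variable {V t : Type*}

/-- `X` is anticomplete to `Y` in `G`: no edge of `G` has one end in `X` and one in `Y`. -/
def Anticomplete (G : SimpleGraph V) (X Y : Set V) : Prop :=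
  ∀ x ∈ X, ∀ y ∈ Y, ¬ G.Adj x y

/-- `(T, χ)` is a tree decomposition of `G`: `T` is a tree, every vertex of `G` is in some
bag, every edge of `G` has both ends in some bag, and each vertex's support induces a
connected subgraph of `T`. -/
def IsTreeDecomp (G : SimpleGraph V) (T : SimpleGraph t) (χ : t → Set V) : Prop :=
  T.IsTree ∧ (∀ v : V, ∃ a, v ∈ χ a) ∧
    (∀ v w : V, G.Adj v w → ∃ a, v ∈ χ a ∧ w ∈ χ a) ∧
    ∀ v : V, (T.induce {a | v ∈ χ a}).Connected

/-- A leaf of `T` is a vertex with exactly one neighbor. -/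
def IsLeaf (T : SimpleGraph t) (a : t) : Prop := ∃! b, T.Adj a b

/-- `z` lies in the component of `T − x` containing `y`: there is a walk from `y` to `z`
avoiding `x`. -/
def AvoidReach (T : SimpleGraph t) (x y z : t) : Prop :=
  ∃ w : T.Walk y z, x ∉ w.support

/-- `χ(T_y)` for the component `T_y` of `T − x` containing `y`: the union of the bags of
the vertices in that component. -/
def branchBag (T : SimpleGraph t) (χ : t → Set V) (x y : t) : Set V :=
  ⋃ z ∈ {z | AvoidReach T x y z}, χ z

/-- `C` is a cutset of `G`: `G \ C` is disconnected. -/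
def IsCutset (G : SimpleGraph V) (C : Set V) : Prop :=
  ∃ a b : ↥(Cᶜ), ¬ (G.induce Cᶜ).Reachable a b

/-- `C` is a minimal cutset of `G`. -/
def MinimalCutset (G : SimpleGraph V) (C : Set V) : Prop :=
  IsCutset G C ∧ ∀ C' ⊂ C, (G.induce C'ᶜ).Connected

/-- The vertex sets of the connected components of `G \ C`. -/
def compSets (G : SimpleGraph V) (C : Set V) : Set (Set V) :=
  Set.range fun c : (G.induce Cᶜ).ConnectedComponent => Subtype.val '' c.supp

/-- The component of `T − e` (for the edge `e = ab`) containing `a`. -/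
def edgeComp (T : SimpleGraph t) (a b : t) : Set t :=
  {z | (T.deleteEdges {s(a, b)}).Reachable a z}

section helpers
variable {T : SimpleGraph t}

lemma tree_bridge (hT : T.IsTree) {a b : t} (hab : T.Adj a b) :
    ¬ (T.deleteEdges {s(a,b)}).Reachable a b := by
  have h := (SimpleGraph.isAcyclic_iff_forall_adj_isBridge.mp hT.IsAcyclic) hab
  rw [SimpleGraph.isBridge_iff] at h
  exact h

lemma edges_toDelete {x u v : t} (W : T.Walk u v) (hx : x ∉ W.support) {e : Sym2 t}
    (he : x ∈ e) : ∀ f ∈ W.edges, f ∈ (T.deleteEdges {e}).edgeSet := by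
  intro f hf
  rw [SimpleGraph.edgeSet_deleteEdges]
  refine ⟨W.edges_subset_edgeSet hf, ?_⟩
  intro hfe
  rw [Set.mem_singleton_iff] at hfe
  rw [← hfe] at he
  induction f using Sym2.ind with
  | _ a b =>
    rcases Sym2.mem_iff.mp he with rfl | rfl
    · exact hx (W.fst_mem_support_of_mem_edges hf)
    · exact hx (W.snd_mem_support_of_mem_edges hf)

lemma edges_ofDelete {u v : t} {s : Set (Sym2 t)} (W : (T.deleteEdges s).Walk u v) :
    ∀ f ∈ W.edges, f ∈ T.edgeSet := fun f hf =>
  (SimpleGraph.edgeSet_deleteEdges (G := T) s ▸ W.edges_subset_edgeSet hf).1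

lemma avoid_of_deleteWalk (hT : T.IsTree) {x yi z : t} (hxy : T.Adj x yi)
    (W : (T.deleteEdges {s(yi, x)}).Walk yi z) : AvoidReach T x yi z := by
  classical
  have hxW : x ∉ W.support := by
    intro hxs
    exact tree_bridge hT hxy.symm ⟨W.takeUntil x hxs⟩
  exact ⟨W.transfer T (edges_ofDelete W), by rwa [SimpleGraph.Walk.support_transfer]⟩

lemma deleteWalk_of_avoid {x yi z : t} (h : AvoidReach T x yi z) :
    (T.deleteEdges {s(yi, x)}).Reachable yi z := by
  obtain ⟨W, hW⟩ := h
  exact ⟨W.transfer _ (edges_toDelete W hW (Sym2.mem_mk_right _ _))⟩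

lemma avoid_disjoint (hT : T.IsTree) {x w1 w2 z : t} (h1 : T.Adj x w1) (h2 : T.Adj x w2)
    (hne : w1 ≠ w2) (ha1 : AvoidReach T x w1 z) (ha2 : AvoidReach T x w2 z) : False := by
  obtain ⟨W1, hW1⟩ := ha1
  obtain ⟨W2, hW2⟩ := ha2
  have hsup : x ∉ (W1.append W2.reverse).support := by
    rw [SimpleGraph.Walk.mem_support_append_iff]
    push_neg
    exact ⟨hW1, by rwa [SimpleGraph.Walk.support_reverse, List.mem_reverse]⟩
  have W' := (W1.append W2.reverse).transfer (T.deleteEdges {s(x, w1)})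
    (edges_toDelete _ hsup (Sym2.mem_mk_left _ _))
  have hadj : (T.deleteEdges {s(x, w1)}).Adj x w2 := by
    rw [SimpleGraph.deleteEdges_adj]
    refine ⟨h2, ?_⟩
    rw [Set.mem_singleton_iff, Sym2.congr_right]
    exact fun h => hne h.symm
  exact tree_bridge hT h1 ((SimpleGraph.Adj.reachable hadj).trans ⟨W'.reverse⟩)

lemma deleteWalk_x_iff (hT : T.IsTree) {x yi : t} (hxy : T.Adj x yi) (z : t) :
    (T.deleteEdges {s(x, yi)}).Reachable x z ↔
      z = x ∨ ∃ w, T.Adj x w ∧ w ≠ yi ∧ AvoidReach T x w z := by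
  classical
  constructor
  · rintro ⟨W0⟩
    obtain ⟨P, hP⟩ := W0.toPath
    cases P with
    | nil => exact Or.inl rfl
    | @cons _ w _ h q =>
      refine Or.inr ⟨w, ?_, ?_, ?_⟩
      · exact ((SimpleGraph.deleteEdges_adj).mp h).1
      · intro hwyi
        have := ((SimpleGraph.deleteEdges_adj).mp h).2
        rw [hwyi] at this
        exact this rfl
      · have hxq : x ∉ q.support := by
          have := hP
          rw [SimpleGraph.Walk.cons_isPath_iff] at this
          exact this.2
        exact ⟨q.transfer T (edges_ofDelete q), by
          rwa [SimpleGraph.Walk.support_transfer]⟩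
  · rintro (rfl | ⟨w, hadj, hne, Wz, hWz⟩)
    · exact SimpleGraph.Reachable.refl _
    · have hadj' : (T.deleteEdges {s(x, yi)}).Adj x w := by
        rw [SimpleGraph.deleteEdges_adj]
        refine ⟨hadj, ?_⟩
        rw [Set.mem_singleton_iff, Sym2.congr_right]
        exact hne
      exact (SimpleGraph.Adj.reachable hadj').trans
        ⟨Wz.transfer _ (edges_toDelete Wz hWz (Sym2.mem_mk_left _ _))⟩

lemma exists_cross {W' : Type*} {H : SimpleGraph W'} (P : Set W') :
    ∀ {a b : W'}, H.Walk a b → a ∉ P → b ∈ P → ∃ c d, H.Adj c d ∧ c ∉ P ∧ d ∈ P := by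
  intro a b w
  induction w with
  | nil => intro h1 h2; exact absurd h2 h1
  | @cons u v b h p ih =>
    intro h1 h2
    by_cases hv : v ∈ P
    · exact ⟨u, v, h, h1, hv⟩
    · exact ih hv h2

lemma induce_walk_support {s : Set t} {a b : ↥s} (w : (T.induce s).Walk a b) :
    ∃ W : T.Walk a.1 b.1, ∀ c ∈ W.support, c ∈ s := by
  induction w with
  | nil => exact ⟨SimpleGraph.Walk.nil, by simp [a.2]⟩
  | @cons u v b h p ih =>
    obtain ⟨W, hW⟩ := ih
    exact ⟨SimpleGraph.Walk.cons (show T.Adj u.1 v.1 from h) W, by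
      intro c hc
      rw [SimpleGraph.Walk.support_cons, List.mem_cons] at hc
      rcases hc with rfl | hc
      · exact u.2
      · exact hW c hc⟩
end helpers

/-- Let `(T, χ)` be a deciduous tree decomposition of a connected graph `G`, with
bipartition `(X, Xᶜ)`, leaves in `Xᶜ`, and `x ∈ X` with neighbors `y 1, …, y k`, so
`S_x = (A 1, …, A k, C)` with `C = χ(x)` and `A i = χ(T_i) \ χ(x)`. Suppose `C` is a
minimal cutset of `G` and the `A i` are exactly the connected components of `G \ C`.
Then `χ(x) ⊆ χ(y i)` for each `i`; consequently the separation corresponding to the edge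
`x(y i)` has middle set exactly `C = χ(x) ∩ χ(y i)` and sides `A i` and `⋃_{j ≠ i} A j`. -/

theorem stmt10 [Fintype V] (G : SimpleGraph V) (hG : G.Connected)
    (T : SimpleGraph t) (χ : t → Set V) (htd : IsTreeDecomp G T χ)
    (X : Set t) (hbip : ∀ a b, T.Adj a b → (a ∈ X ↔ b ∉ X))
    (hleaf : ∀ a, IsLeaf T a → a ∉ X)
    (x : t) (hx : x ∈ X)
    (k : ℕ) (y : Fin k → t) (hyinj : Function.Injective y)
    (hyadj : ∀ i, T.Adj x (y i)) (hysurj : ∀ z, T.Adj x z → ∃ i, y i = z)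
    (hcut : MinimalCutset G (χ x))
    (hcomp : ∀ i, branchBag T χ x (y i) \ χ x ∈ compSets G (χ x))
    (hcompsurj : ∀ D ∈ compSets G (χ x), ∃ i, branchBag T χ x (y i) \ χ x = D) :
    ∀ i, χ x ⊆ χ (y i) ∧
      χ x ∩ χ (y i) = χ x ∧
      (⋃ z ∈ edgeComp T (y i) x, χ z) \ (χ x ∩ χ (y i)) =
        branchBag T χ x (y i) \ χ x ∧
      (⋃ z ∈ edgeComp T x (y i), χ z) \ (χ x ∩ χ (y i)) =
        ⋃ j ∈ {j | j ≠ i}, (branchBag T χ x (y j) \ χ x) := by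
  classical
  obtain ⟨hT, hcov, hedge, hsupp⟩ := htd
  have key : ∀ i, χ x ⊆ χ (y i) := by
    intro i v hvC
    by_contra hv
    obtain ⟨D, hD⟩ := hcomp i
    set A := branchBag T χ x (y i) \ χ x with hA
    -- A is nonempty
    obtain ⟨r, hr⟩ := D.exists_rep
    have hu : (r : V) ∈ A := by
      rw [← hD]
      exact ⟨r, by rw [SimpleGraph.ConnectedComponent.mem_supp_iff]; exact hr, rfl⟩
    -- A is closed under adjacency within (χ x)ᶜ
    have hclose : ∀ c d : V, c ∈ (χ x)ᶜ → d ∈ A → G.Adj c d → c ∈ A := by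
      intro c d hc hd hadj
      rw [← hD] at hd ⊢
      obtain ⟨p, hp, rfl⟩ := hd
      have hadj' : (G.induce (χ x)ᶜ).Adj ⟨c, hc⟩ p := hadj
      refine ⟨⟨c, hc⟩, ?_, rfl⟩
      rw [SimpleGraph.ConnectedComponent.mem_supp_iff] at hp ⊢
      rw [← hp]
      exact SimpleGraph.ConnectedComponent.sound hadj'.reachable
    -- some vertex of (χ x)ᶜ outside A
    obtain ⟨a0, b0, hab⟩ := hcut.1
    have hw : ∃ w0 : ↥(χ x)ᶜ, (w0 : V) ∉ A := by
      by_contra hcon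
      push_neg at hcon
      refine hab ?_
      have h1 := hcon a0
      have h2 := hcon b0
      rw [← hD] at h1 h2
      obtain ⟨p1, hp1, he1⟩ := h1
      obtain ⟨p2, hp2, he2⟩ := h2
      rw [SimpleGraph.ConnectedComponent.mem_supp_iff] at hp1 hp2
      have : p1 = a0 := Subtype.ext he1
      subst this
      have : p2 = b0 := Subtype.ext he2
      subst this
      exact (SimpleGraph.ConnectedComponent.eq).mp (hp1.trans hp2.symm)
    obtain ⟨w0, hw0⟩ := hw
    -- the reduced cutset
    have hconn := hcut.2 (χ x \ {v}) (Set.sdiff_singleton_ssubset.mpr hvC)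
    have hsubC : (χ x)ᶜ ⊆ (χ x \ {v})ᶜ := Set.compl_subset_compl.mpr Set.diff_subset
    have huC : (r : V) ∉ χ x := hu.2
    have hwalk := (hconn.preconnected ⟨w0.1, hsubC w0.2⟩ ⟨r.1, hsubC r.2⟩)
    obtain ⟨wlk⟩ := hwalk
    obtain ⟨c, d, hcd, hcA, hdA⟩ :=
      exists_cross {p : ↥(χ x \ {v})ᶜ | p.1 ∈ A} wlk hw0 hu
    have hGcd : G.Adj c.1 d.1 := hcd
    -- c must be v
    have hcv : c.1 = v := by
      by_cases hcC : c.1 ∈ χ x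
      · by_contra hne
        exact c.2 ⟨hcC, hne⟩
      · exact absurd (hclose c.1 d.1 hcC hdA hGcd) hcA
    rw [hcv] at hGcd
    -- bag containing the edge v - d
    obtain ⟨a, hva, hda⟩ := hedge v d.1 hGcd
    -- d ∈ branchBag
    have hdb : d.1 ∈ branchBag T χ x (y i) := hdA.1
    have hdnx : d.1 ∉ χ x := hdA.2
    rw [branchBag, Set.mem_iUnion₂] at hdb
    obtain ⟨z₀, hz₀, hdz₀⟩ := hdb
    -- AvoidReach T x (y i) a
    obtain ⟨iw⟩ := (hsupp d.1).preconnected ⟨z₀, hdz₀⟩ ⟨a, hda⟩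
    obtain ⟨W2, hW2⟩ := induce_walk_support iw
    have hxW2 : x ∉ W2.support := fun hxs => hdnx (hW2 x hxs)
    obtain ⟨W1, hW1⟩ := hz₀
    have haav : AvoidReach T x (y i) a := by
      refine ⟨W1.append W2, ?_⟩
      rw [SimpleGraph.Walk.mem_support_append_iff]
      push_neg
      exact ⟨hW1, hxW2⟩
    -- walk from a to x inside the support of v
    obtain ⟨iw2⟩ := (hsupp v).preconnected ⟨a, hva⟩ ⟨x, hvC⟩
    obtain ⟨W3, hW3⟩ := induce_walk_support iw2
    have hyiW3 : (y i) ∉ W3.support := fun hys => hv (hW3 _ hys)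
    have hW3e : ∀ f ∈ W3.edges, f ∈ (T.deleteEdges {s(x, y i)}).edgeSet := by
      intro f hf
      rw [SimpleGraph.edgeSet_deleteEdges]
      refine ⟨W3.edges_subset_edgeSet hf, ?_⟩
      intro hfe
      rw [Set.mem_singleton_iff] at hfe
      rw [hfe] at hf
      exact hyiW3 (W3.snd_mem_support_of_mem_edges hf)
    have hreach : (T.deleteEdges {s(x, y i)}).Reachable x a :=
      (SimpleGraph.Reachable.symm ⟨W3.transfer _ hW3e⟩)
    rw [deleteWalk_x_iff hT (hyadj i)] at hreach
    rcases hreach with rfl | ⟨w, hadjw, hwne, havw⟩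
    · obtain ⟨W, hW⟩ := haav
      exact hW W.end_mem_support
    · exact avoid_disjoint hT hadjw (hyadj i) hwne havw haav
  intro i
  have part2 : χ x ∩ χ (y i) = χ x := Set.inter_eq_left.mpr (key i)
  have hec1 : edgeComp T (y i) x = {z | AvoidReach T x (y i) z} := by
    ext z
    constructor
    · rintro ⟨W⟩
      exact avoid_of_deleteWalk hT (hyadj i) W
    · exact fun hz => deleteWalk_of_avoid hz
  refine ⟨key i, part2, ?_, ?_⟩
  · rw [part2, hec1]
    rfl
  · rw [part2]
    ext v
    simp only [Set.mem_diff, Set.mem_iUnion, Set.mem_setOf_eq, exists_prop]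
    constructor
    · rintro ⟨⟨z, hz, hvz⟩, hvx⟩
      rw [edgeComp, Set.mem_setOf_eq, deleteWalk_x_iff hT (hyadj i)] at hz
      rcases hz with rfl | ⟨w, hadj, hne, hav⟩
      · exact absurd hvz hvx
      · obtain ⟨j, rfl⟩ := hysurj w hadj
        have hji : j ≠ i := fun h => hne (by rw [h])
        refine ⟨j, hji, ?_, hvx⟩
        rw [branchBag, Set.mem_iUnion₂]
        exact ⟨z, hav, hvz⟩
    · rintro ⟨j, hji, hvb, hvx⟩
      rw [branchBag, Set.mem_iUnion₂] at hvb
      obtain ⟨z, hav, hvz⟩ := hvb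
      refine ⟨⟨z, ?_, hvz⟩, hvx⟩
      rw [edgeComp, Set.mem_setOf_eq, deleteWalk_x_iff hT (hyadj i)]
      exact Or.inr ⟨y j, hyadj j, fun h => hji (hyinj h), hav⟩
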